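/- Let a ∈ ℝ^m and let l ∈ K^m be a vector such that the tuple (deg l_1,…,deg l_m) realizes the tropical dependence of a, i.e. the minimum min_{j=1}^m (a_j + deg l_j) is attained for at least two indices j. Then there exist x_1,…,x_m ∈ K with deg x_j = a_j for every j ∈ {1,…,m} and Σ_{j=1}^m x_j l_j = 0. -/

import Mathlib

noncomputable section

/-- The field of generalized power series over ℝ with complex coefficients. -/
abbrev K : Type := HahnSeries ℝ ℂ

open Classical in
/-- The degree of an element of `K`: the least exponent of its support, `⊤` for `0`. -/
noncomputable def Kdeg (a : K) : WithTop ℝ :=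
  if a = 0 then ⊤ else ((HahnSeries.order a : ℝ) : WithTop ℝ)

/-- A square real matrix is tropically non-singular if the minimum in the tropical
permanent is attained by exactly one permutation. -/
def TropNonsing {k : ℕ} (S : Matrix (Fin k) (Fin k) ℝ) : Prop :=
  ∃! σ : Equiv.Perm (Fin k), ∀ τ : Equiv.Perm (Fin k),
    (∑ i, S i (σ i)) ≤ ∑ i, S i (τ i)

/-- The tropical rank: the largest size of a tropically non-singular square submatrix. -/
noncomputable def tropRank {m n : ℕ} (A : Matrix (Fin m) (Fin n) ℝ) : ℕ :=
  sSup {r : ℕ | ∃ (ρ : Fin r → Fin m) (c : Fin r → Fin n),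
    Function.Injective ρ ∧ Function.Injective c ∧ TropNonsing (A.submatrix ρ c)}

/-- A matrix over `K` is a lift of a real matrix if degrees of entries match. -/
def IsLift {m n : ℕ} (F : Matrix (Fin m) (Fin n) K) (B : Matrix (Fin m) (Fin n) ℝ) : Prop :=
  ∀ i j, Kdeg (F i j) = (B i j : WithTop ℝ)

/-- The Kapranov rank: the smallest rank over `K` of a lift. -/
noncomputable def kapRank {m n : ℕ} (B : Matrix (Fin m) (Fin n) ℝ) : ℕ :=
  sInf {r : ℕ | ∃ F : Matrix (Fin m) (Fin n) K, IsLift F B ∧ F.rank = r}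

/-- The tuple `lam` realizes the tropical dependence of the rows of `A`. -/
def Realizes {m n : ℕ} (lam : Fin m → WithTop ℝ) (A : Matrix (Fin m) (Fin n) ℝ) : Prop :=
  (∃ τ, lam τ ≠ ⊤) ∧
  ∀ k : Fin n, ∃ τ₁ τ₂ : Fin m, τ₁ ≠ τ₂ ∧
    (∀ τ, lam τ₁ + (A τ₁ k : WithTop ℝ) ≤ lam τ + (A τ k : WithTop ℝ)) ∧
    (∀ τ, lam τ₂ + (A τ₂ k : WithTop ℝ) ≤ lam τ + (A τ k : WithTop ℝ))

open Classical in
/-- The pattern of a real matrix, with entries in `{0, ∞} ⊆ ℝ ∪ {∞}`. -/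
noncomputable def pat {m n : ℕ} (A : Matrix (Fin m) (Fin n) ℝ) (u : Fin m) (v : Fin n) :
    WithTop ℝ :=
  if ∀ i, A u v ≤ A i v then 0 else ⊤

/-- The support of the `j`-th column of the pattern of `A`. -/
def colSupp {m n : ℕ} (A : Matrix (Fin m) (Fin n) ℝ) (j : Fin n) : Set (Fin m) :=
  {u | ∀ i, A u j ≤ A i j}


theorem single_equation_solution (m : ℕ) (a : Fin m → ℝ) (l : Fin m → K)
    (h : ∃ j₁ j₂ : Fin m, j₁ ≠ j₂ ∧
      (∀ j, (a j₁ : WithTop ℝ) + Kdeg (l j₁) ≤ (a j : WithTop ℝ) + Kdeg (l j)) ∧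
      (∀ j, (a j₂ : WithTop ℝ) + Kdeg (l j₂) ≤ (a j : WithTop ℝ) + Kdeg (l j))) :
    ∃ x : Fin m → K, (∀ j, Kdeg (x j) = (a j : WithTop ℝ)) ∧ ∑ j, x j * l j = 0 := by
  classical
  obtain ⟨j₁, j₂, hne, h1, h2⟩ := h
  by_cases hl1 : l j₁ = 0
  · have hall : ∀ j, l j = 0 := by
      intro j
      by_contra hj
      have hle := h1 j
      simp only [Kdeg, if_pos hl1, if_neg hj, add_top] at hle
      rw [← WithTop.coe_add] at hle
      exact WithTop.not_top_le_coe _ hle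
    refine ⟨fun j => HahnSeries.single (a j) 1, fun j => ?_, by simp [hall]⟩
    simp [Kdeg, HahnSeries.single_ne_zero (one_ne_zero (α := ℂ)),
      HahnSeries.order_single (one_ne_zero (α := ℂ))]
  · set d₁ := (l j₁).order with hd₁
    have hK1 : Kdeg (l j₁) = (d₁ : WithTop ℝ) := if_neg hl1
    have hl2 : l j₂ ≠ 0 := by
      intro h0
      have hle := h2 j₁
      simp only [Kdeg, if_pos h0, if_neg hl1, add_top] at hle
      rw [← WithTop.coe_add] at hle
      exact WithTop.not_top_le_coe _ hle
    set d₂ := (l j₂).order with hd₂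
    have hK2 : Kdeg (l j₂) = (d₂ : WithTop ℝ) := if_neg hl2
    have heq : a j₁ + d₁ = a j₂ + d₂ := by
      have e1 := h1 j₂; have e2 := h2 j₁
      rw [hK1, hK2, ← WithTop.coe_add, ← WithTop.coe_add, WithTop.coe_le_coe] at e1 e2
      linarith
    set d : ℝ := a j₂ + d₂ with hd
    have hlow : ∀ j : Fin m, ∀ (c : ℂ) (e : ℝ), e < d →
        (HahnSeries.single (a j) c * l j).coeff e = 0 := by
      intro j c e he
      by_cases hlj : l j = 0
      · simp [hlj]
      by_cases hc : c = 0
      · simp [hc]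
      apply HahnSeries.coeff_eq_zero_of_lt_order
      rw [HahnSeries.order_mul (HahnSeries.single_ne_zero hc) hlj,
        HahnSeries.order_single hc]
      have hle := h2 j
      rw [hK2, Kdeg, if_neg hlj, ← WithTop.coe_add, ← WithTop.coe_add,
        WithTop.coe_le_coe] at hle
      linarith
    set u : ℂ := (l j₂).coeff d₂ with hu
    have hu0 : u ≠ 0 := (HahnSeries.coeff_order_eq_zero.not.mpr hl2)
    set T : Finset (Fin m) := (Finset.univ.erase j₁).erase j₂ with hT
    set R : K := ∑ j ∈ T, HahnSeries.single (a j) (1 : ℂ) * l j with hR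
    have hRcoeff : ∀ e : ℝ, R.coeff e = ∑ j ∈ T, (HahnSeries.single (a j) (1 : ℂ) * l j).coeff e := by
      intro e
      rw [hR]
      exact map_sum (HahnSeries.coeff.addMonoidHom e) _ T
    have hRlow : ∀ e : ℝ, e < d → R.coeff e = 0 := by
      intro e he
      rw [hRcoeff]
      exact Finset.sum_eq_zero fun j _ => hlow j 1 e he
    set v : ℂ := R.coeff d with hv
    set c : ℂ := if u + v = 0 then 2 else 1 with hc
    have hc0 : c ≠ 0 := by rw [hc]; split <;> norm_num
    have hcuv : c * u + v ≠ 0 := by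
      rw [hc]; split
      · rename_i h0
        intro h'
        apply hu0
        linear_combination h' - h0
      · rename_i h0
        intro h'
        apply h0
        linear_combination h'
    set S : K := HahnSeries.single (a j₂) c * l j₂ + R with hS
    have hSd : S.coeff d = c * u + v := by
      rw [hS, HahnSeries.coeff_add, ← hv]
      congr 1
      have : d = d₂ + a j₂ := by rw [hd]; ring
      rw [this, HahnSeries.coeff_single_mul_add, hu]
    have hS0 : S ≠ 0 := by
      intro h0
      apply hcuv
      rw [← hSd, h0, HahnSeries.coeff_zero]
    have hSlow : ∀ e : ℝ, e < d → S.coeff e = 0 := by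
      intro e he
      rw [hS, HahnSeries.coeff_add, hlow j₂ c e he, hRlow e he, add_zero]
    have hSord : S.order = d := by
      apply le_antisymm
      · apply HahnSeries.order_le_of_coeff_ne_zero
        rw [hSd]; exact hcuv
      · by_contra hlt
        push_neg at hlt
        exact (HahnSeries.coeff_order_eq_zero.not.mpr hS0) (hSlow _ hlt)
    have hinv : (l j₁)⁻¹ ≠ 0 := inv_ne_zero hl1
    have hordinv : (l j₁)⁻¹.order = -d₁ := by
      have h1' : ((l j₁) * (l j₁)⁻¹).order = 0 := by
        rw [mul_inv_cancel₀ hl1, HahnSeries.order_one]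
      rw [HahnSeries.order_mul hl1 hinv, ← hd₁] at h1'
      linarith
    set x : Fin m → K := fun j =>
      if j = j₁ then -(S * (l j₁)⁻¹)
      else if j = j₂ then HahnSeries.single (a j₂) c
      else HahnSeries.single (a j) 1 with hx
    refine ⟨x, ?_, ?_⟩
    · intro j
      by_cases hj : j = j₁
      · subst hj
        have hx1 : x j = -(S * (l j)⁻¹) := by rw [hx]; simp
        have hne0 : S * (l j)⁻¹ ≠ 0 := mul_ne_zero hS0 hinv
        rw [hx1, Kdeg, if_neg (neg_ne_zero.mpr hne0), HahnSeries.order_neg,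
          HahnSeries.order_mul hS0 hinv, hSord, hordinv]
        norm_cast
        linarith
      by_cases hj2 : j = j₂
      · subst hj2
        have hx2 : x j = HahnSeries.single (a j) c := by rw [hx]; simp [hj]
        rw [hx2, Kdeg, if_neg (HahnSeries.single_ne_zero hc0),
          HahnSeries.order_single hc0]
      · have hx3 : x j = HahnSeries.single (a j) 1 := by rw [hx]; simp [hj, hj2]
        rw [hx3, Kdeg, if_neg (HahnSeries.single_ne_zero (one_ne_zero (α := ℂ))),
          HahnSeries.order_single (one_ne_zero (α := ℂ))]
    · have hj2mem : j₂ ∈ Finset.univ.erase j₁ :=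
        Finset.mem_erase.mpr ⟨hne.symm, Finset.mem_univ j₂⟩
      have hsplit1 : ∑ j, x j * l j
          = x j₁ * l j₁ + ∑ j ∈ Finset.univ.erase j₁, x j * l j :=
        (Finset.add_sum_erase _ _ (Finset.mem_univ j₁)).symm
      have hsplit2 : ∑ j ∈ Finset.univ.erase j₁, x j * l j
          = x j₂ * l j₂ + ∑ j ∈ T, x j * l j :=
        (Finset.add_sum_erase _ _ hj2mem).symm
      have hTsum : ∑ j ∈ T, x j * l j = R := by
        rw [hR]
        apply Finset.sum_congr rfl
        intro j hj
        simp only [hT, Finset.mem_erase] at hj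
        have : x j = HahnSeries.single (a j) 1 := by rw [hx]; simp [hj.1, hj.2.1]
        rw [this]
      have hx1 : x j₁ = -(S * (l j₁)⁻¹) := by rw [hx]; simp
      have hx2 : x j₂ = HahnSeries.single (a j₂) c := by rw [hx]; simp [hne.symm]
      have hSdef : HahnSeries.single (a j₂) c * l j₂ + R = S := hS.symm
      rw [hsplit1, hsplit2, hTsum, hx1, hx2, hSdef]
      have hmul : S * (l j₁)⁻¹ * l j₁ = S := by
        rw [mul_assoc, inv_mul_cancel₀ hl1, mul_one]
      linear_combination -hmul

end
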